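/- arXiv:1107.4681 — 2 statements merged into one kernel-verified Lean document; each statement's English description precedes it below -/
import Mathlib

section
/- The Weyl denominator identity holds for a finite root system: the product over positive roots ∏_{α∈Δ⁺}(1 - e^{-α}) equals the alternating sum ∑_{w∈W} ε(w) e^{w(ρ)-ρ}, as elements of the group algebra of the weight lattice, where ε(w) = (-1)^{l(w)}. -/
open scoped RealInnerProductSpace
open scoped Classical

noncomputable section

/-- The reflection `s_v(x) = x - (2(v,x)/(v,v)) v` in the vector `v`. -/
def sRefl {n : ℕ} (v x : EuclideanSpace ℝ (Fin n)) : EuclideanSpace ℝ (Fin n) :=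
  x - (2 * ⟪v, x⟫ / ⟪v, v⟫) • v

/-- A finite reduced crystallographic root system `Δ` in Euclidean space together with a
chosen set of simple roots `α i` and the corresponding set `pos` of positive roots
(the roots which are nonnegative combinations of the simple roots). -/
structure RootData (n r : ℕ) where
  α : Fin r → EuclideanSpace ℝ (Fin n)
  Δ : Finset (EuclideanSpace ℝ (Fin n))
  pos : Finset (EuclideanSpace ℝ (Fin n))
  root_ne_zero : ∀ β ∈ Δ, β ≠ (0 : EuclideanSpace ℝ (Fin n))
  simple_mem : ∀ i, α i ∈ Δ
  indep : LinearIndependent ℝ α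
  reflect_mem : ∀ β ∈ Δ, ∀ γ ∈ Δ, sRefl β γ ∈ Δ
  crystallographic : ∀ β ∈ Δ, ∀ γ ∈ Δ, ∃ m : ℤ, 2 * ⟪β, γ⟫ / ⟪β, β⟫ = (m : ℝ)
  reduced : ∀ β ∈ Δ, ∀ c : ℝ, c • β ∈ Δ → c = 1 ∨ c = -1
  pos_subset : ∀ β ∈ pos, β ∈ Δ
  mem_pos_iff : ∀ β ∈ Δ,
    (β ∈ pos ↔ ∃ c : Fin r → ℝ, (∀ i, 0 ≤ c i) ∧ β = ∑ i, c i • α i)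
  pos_or_neg : ∀ β ∈ Δ, β ∈ pos ∨ -β ∈ pos

variable {n r : ℕ}

/-- The Weyl vector: half the sum of the positive roots. -/
def weylVec (S : RootData n r) : EuclideanSpace ℝ (Fin n) :=
  (1 / 2 : ℝ) • ∑ β ∈ S.pos, β

/-- The set of simple reflections, as linear automorphisms. -/
def simpleReflections (S : RootData n r) :
    Set (EuclideanSpace ℝ (Fin n) ≃ₗ[ℝ] EuclideanSpace ℝ (Fin n)) :=
  { w | ∃ i, ∀ x, w x = sRefl (S.α i) x }

/-- The Weyl group: the group generated by the simple reflections. -/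
def weylGroup (S : RootData n r) :
    Subgroup (EuclideanSpace ℝ (Fin n) ≃ₗ[ℝ] EuclideanSpace ℝ (Fin n)) :=
  Subgroup.closure (simpleReflections S)

/-- The length of a Weyl group element: the minimal number of simple reflections
in a word representing it. -/
def len (S : RootData n r)
    (w : EuclideanSpace ℝ (Fin n) ≃ₗ[ℝ] EuclideanSpace ℝ (Fin n)) : ℕ :=
  sInf { k | ∃ l : List (EuclideanSpace ℝ (Fin n) ≃ₗ[ℝ] EuclideanSpace ℝ (Fin n)),
    l.length = k ∧ (∀ g ∈ l, g ∈ simpleReflections S) ∧ l.prod = w }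

/-- The Kostant partition function: the number of ways to write `β` as a sum of
positive roots with nonnegative integer multiplicities. -/
def kostantP (S : RootData n r) (β : EuclideanSpace ℝ (Fin n)) : ℕ :=
  Nat.card { f : EuclideanSpace ℝ (Fin n) → ℕ //
    (∀ v, v ∉ S.pos → f v = 0) ∧ ∑ v ∈ S.pos, (f v : ℝ) • v = β }


/-! ### Auxiliary development -/

section AuxDev

variable {n r : ℕ}

local notation "V" => EuclideanSpace ℝ (Fin n)

lemma sRefl_def (v x : V) : sRefl v x = x - (2 * ⟪v, x⟫ / ⟪v, v⟫) • v := rfl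

lemma sRefl_zero (x : V) : sRefl (0:V) x = x := by
  simp [sRefl]

lemma inner_sRefl (v x y : V) : ⟪sRefl v x, sRefl v y⟫ = ⟪x, y⟫ := by
  rcases eq_or_ne v 0 with rfl | hv
  · simp [sRefl]
  · have hq : ⟪v, v⟫ ≠ (0:ℝ) := inner_self_ne_zero.2 hv
    have expand : ⟪sRefl v x, sRefl v y⟫ =
        ⟪x, y⟫ - (2 * ⟪v, y⟫ / ⟪v, v⟫) * ⟪v, x⟫ - (2 * ⟪v, x⟫ / ⟪v, v⟫) * ⟪v, y⟫
          + (2 * ⟪v, x⟫ / ⟪v, v⟫) * ((2 * ⟪v, y⟫ / ⟪v, v⟫) * ⟪v, v⟫) := by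
      simp only [sRefl, inner_sub_left, inner_sub_right, real_inner_smul_left,
        real_inner_smul_right]
      rw [real_inner_comm x v]
      ring
    rw [expand]
    set q : ℝ := ⟪v, v⟫ with hqdef
    set a : ℝ := ⟪v, x⟫ with hadef
    set b : ℝ := ⟪v, y⟫ with hbdef
    field_simp
    ring

lemma sRefl_sRefl (v x : V) : sRefl v (sRefl v x) = x := by
  rcases eq_or_ne v 0 with rfl | hv
  · simp [sRefl]
  · have hq : ⟪v, v⟫ ≠ (0:ℝ) := inner_self_ne_zero.2 hv
    have h1 : ⟪v, sRefl v x⟫ = -⟪v, x⟫ := by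
      simp only [sRefl, inner_sub_right, real_inner_smul_right]
      set q : ℝ := ⟪v, v⟫ with hqdef
      set a : ℝ := ⟪v, x⟫ with hadef
      field_simp
      ring
    rw [sRefl_def, h1, sRefl_def]
    have : (2 * -⟪v, x⟫ / ⟪v, v⟫) = -(2 * ⟪v, x⟫ / ⟪v, v⟫) := by ring
    rw [this, neg_smul]
    abel

lemma sRefl_self {v : V} (hv : v ≠ 0) : sRefl v v = -v := by
  have hq : ⟪v, v⟫ ≠ (0:ℝ) := inner_self_ne_zero.2 hv
  rw [sRefl_def]
  rw [mul_div_assoc, div_self hq, mul_one]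
  rw [two_smul]; abel

lemma sRefl_of_inner_eq_zero {v x : V} (h : ⟪v, x⟫ = 0) : sRefl v x = x := by
  simp [sRefl_def, h]

lemma sRefl_add (v x y : V) : sRefl v (x + y) = sRefl v x + sRefl v y := by
  simp only [sRefl_def, inner_add_right]
  rw [show (2 * (⟪v, x⟫ + ⟪v, y⟫) / ⟪v, v⟫ : ℝ)
      = 2 * ⟪v, x⟫ / ⟪v, v⟫ + 2 * ⟪v, y⟫ / ⟪v, v⟫ by ring, add_smul]
  abel

lemma sRefl_smul (v : V) (c : ℝ) (x : V) : sRefl v (c • x) = c • sRefl v x := by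
  simp only [sRefl_def, real_inner_smul_right, smul_sub, smul_smul]
  rw [show (2 * (c * ⟪v, x⟫) / ⟪v, v⟫ : ℝ) = c * (2 * ⟪v, x⟫ / ⟪v, v⟫) by ring]

lemma sRefl_neg (v x : V) : sRefl v (-x) = -(sRefl v x) := by
  have := sRefl_smul v (-1) x
  simpa using this

lemma sRefl_sub (v x y : V) : sRefl v (x - y) = sRefl v x - sRefl v y := by
  rw [sub_eq_add_neg, sRefl_add, sRefl_neg, sub_eq_add_neg]

/-- The reflection in a nonzero vector, as a linear equivalence. -/
def sReflEquiv (v : V) : V ≃ₗ[ℝ] V where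
  toFun := sRefl v
  invFun := sRefl v
  map_add' := sRefl_add v
  map_smul' := sRefl_smul v
  left_inv := sRefl_sRefl v
  right_inv := sRefl_sRefl v

@[simp] lemma sReflEquiv_apply (v x : V) : sReflEquiv v x = sRefl v x := rfl


namespace RootData

variable (S : RootData n r)

lemma alpha_ne_zero (i : Fin r) : S.α i ≠ 0 := S.root_ne_zero _ (S.simple_mem i)

lemma inner_alpha_pos (i : Fin r) : (0:ℝ) < ⟪S.α i, S.α i⟫ :=
  lt_of_le_of_ne real_inner_self_nonneg
    (Ne.symm (inner_self_ne_zero.2 (S.alpha_ne_zero i)))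

lemma alpha_mem_pos (i : Fin r) : S.α i ∈ S.pos := by
  rw [S.mem_pos_iff _ (S.simple_mem i)]
  refine ⟨fun j => if j = i then 1 else 0, fun j => by by_cases h : j = i <;> simp [h], ?_⟩
  rw [Finset.sum_eq_single i]
  · simp
  · intro j _ hj; simp [hj]
  · intro h; exact absurd (Finset.mem_univ i) h

lemma pos_combo {β : V} (hβ : β ∈ S.pos) :
    ∃ c : Fin r → ℝ, (∀ i, 0 ≤ c i) ∧ β = ∑ i, c i • S.α i :=
  (S.mem_pos_iff β (S.pos_subset β hβ)).1 hβ

lemma indep' {g : Fin r → ℝ} (h : ∑ i, g i • S.α i = 0) : ∀ i, g i = 0 :=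
  Fintype.linearIndependent_iff.1 S.indep g h

lemma pos_ne_zero {β : V} (hβ : β ∈ S.pos) : β ≠ 0 :=
  S.root_ne_zero β (S.pos_subset β hβ)

lemma not_neg_mem_pos {β : V} (hβ : β ∈ S.pos) : -β ∉ S.pos := by
  intro hneg
  obtain ⟨c, hc, hcb⟩ := S.pos_combo hβ
  obtain ⟨d, hd, hdb⟩ := S.pos_combo hneg
  have hsum : ∑ i, (c i + d i) • S.α i = 0 := by
    simp only [add_smul, Finset.sum_add_distrib]
    rw [← hcb, ← hdb]; abel
  have h0 := S.indep' hsum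
  have hc0 : ∀ i, c i = 0 := fun i => le_antisymm (by linarith [hd i, h0 i]) (hc i)
  refine S.pos_ne_zero hβ ?_
  rw [hcb]
  exact Finset.sum_eq_zero fun i _ => by rw [hc0 i, zero_smul]

lemma neg_mem_pos_of_not_mem {β : V} (hβ : β ∈ S.Δ) (h : β ∉ S.pos) : -β ∈ S.pos :=
  (S.pos_or_neg β hβ).resolve_left h

lemma neg_mem_Δ {β : V} (hβ : β ∈ S.Δ) : -β ∈ S.Δ := by
  have := S.reflect_mem β hβ β hβ
  rwa [sRefl_self (S.root_ne_zero β hβ)] at this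

lemma sRefl_alpha (i : Fin r) : sRefl (S.α i) (S.α i) = -S.α i :=
  sRefl_self (S.alpha_ne_zero i)

/-- The key lemma: a simple reflection permutes the positive roots other than the
corresponding simple root. -/
lemma sRefl_pos_mem (i : Fin r) {β : V} (hβ : β ∈ S.pos) (hne : β ≠ S.α i) :
    sRefl (S.α i) β ∈ S.pos := by
  obtain ⟨c, hc, hcb⟩ := S.pos_combo hβ
  -- there is an index `j ≠ i` with `c j > 0`
  have hj : ∃ j, j ≠ i ∧ 0 < c j := by
    by_contra hcon
    push_neg at hcon
    have hzero : ∀ j, j ≠ i → c j = 0 := fun j hji =>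
      le_antisymm (hcon j hji) (hc j)
    have hci : β = c i • S.α i := by
      rw [hcb, Finset.sum_eq_single i]
      · intro j _ hji; rw [hzero j hji, zero_smul]
      · intro h; exact absurd (Finset.mem_univ i) h
    have hmem : c i • S.α i ∈ S.Δ := by rw [← hci]; exact S.pos_subset β hβ
    rcases S.reduced (S.α i) (S.simple_mem i) (c i) hmem with h1 | h1
    · exact hne (by rw [hci, h1, one_smul])
    · have : (0:ℝ) ≤ c i := hc i
      rw [h1] at this; linarith
  obtain ⟨j, hji, hcj⟩ := hj
  set m : ℝ := 2 * ⟪S.α i, β⟫ / ⟪S.α i, S.α i⟫ with hm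
  have hsb : sRefl (S.α i) β = β - m • S.α i := rfl
  have hsΔ : sRefl (S.α i) β ∈ S.Δ :=
    S.reflect_mem _ (S.simple_mem i) β (S.pos_subset β hβ)
  by_contra hnot
  have hnegpos : -(sRefl (S.α i) β) ∈ S.pos := S.neg_mem_pos_of_not_mem hsΔ hnot
  obtain ⟨d, hd, hdb⟩ := S.pos_combo hnegpos
  have hsum : ∑ k, (c k + d k - if k = i then m else 0) • S.α k = 0 := by
    simp only [sub_smul, add_smul, Finset.sum_sub_distrib, Finset.sum_add_distrib]
    have hite : ∑ k, (if k = i then m else 0) • S.α k = m • S.α i := by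
      rw [Finset.sum_eq_single i]
      · simp
      · intro k _ hk; simp [hk]
      · intro h; exact absurd (Finset.mem_univ i) h
    rw [hite, ← hcb, ← hdb, hsb]
    abel
  have h0 := S.indep' hsum
  have := h0 j
  simp only [if_neg hji] at this
  have : c j + d j = 0 := by linarith
  linarith [hd j]

lemma sRefl_pos_ne (i : Fin r) {β : V} (hβ : β ∈ S.pos) (hne : β ≠ S.α i) :
    sRefl (S.α i) β ≠ S.α i := by
  intro h
  have : β = -S.α i := by
    have := congrArg (sRefl (S.α i)) h
    rwa [sRefl_sRefl, S.sRefl_alpha] at this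
  rw [this] at hβ
  exact S.not_neg_mem_pos (S.alpha_mem_pos i) hβ

/-- Classification of when a simple reflection sends a root out of the positive roots. -/
lemma sRefl_notin_pos_iff (i : Fin r) {δ : V} (hδ : δ ∈ S.Δ) :
    sRefl (S.α i) δ ∉ S.pos ↔ (δ = S.α i ∨ (δ ∉ S.pos ∧ δ ≠ -S.α i)) := by
  constructor
  · intro h
    by_cases hp : δ ∈ S.pos
    · left
      by_contra hne
      exact h (S.sRefl_pos_mem i hp hne)
    · right
      refine ⟨hp, ?_⟩
      rintro rfl
      rw [sRefl_neg, S.sRefl_alpha, neg_neg] at h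
      exact h (S.alpha_mem_pos i)
  · rintro (rfl | ⟨hp, hne⟩)
    · rw [S.sRefl_alpha]
      exact S.not_neg_mem_pos (S.alpha_mem_pos i)
    · have hneg : -δ ∈ S.pos := S.neg_mem_pos_of_not_mem hδ hp
      have hne' : -δ ≠ S.α i := fun h => hne (by rw [← h, neg_neg])
      have := S.sRefl_pos_mem i hneg hne'
      rw [sRefl_neg] at this
      intro hmem
      exact S.not_neg_mem_pos hmem this

end RootData


section WeylBasic

variable (S : RootData n r)

lemma lequiv_mul_apply (u v : V ≃ₗ[ℝ] V) (x : V) : (u * v) x = u (v x) := rfl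

lemma lequiv_one_apply (x : V) : (1 : V ≃ₗ[ℝ] V) x = x := rfl

lemma lequiv_inv_apply (u : V ≃ₗ[ℝ] V) (x : V) : u⁻¹ x = u.symm x := rfl

lemma lequiv_apply_inv_apply (u : V ≃ₗ[ℝ] V) (x : V) : u (u⁻¹ x) = x := by
  rw [lequiv_inv_apply, LinearEquiv.apply_symm_apply]

lemma lequiv_inv_apply_apply (u : V ≃ₗ[ℝ] V) (x : V) : u⁻¹ (u x) = x := by
  rw [lequiv_inv_apply, LinearEquiv.symm_apply_apply]

lemma simple_mul_self {s : V ≃ₗ[ℝ] V} (hs : s ∈ simpleReflections S) : s * s = 1 := by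
  obtain ⟨i, hi⟩ := hs
  refine LinearEquiv.ext fun x => ?_
  rw [lequiv_mul_apply, hi, hi, sRefl_sRefl, lequiv_one_apply]

lemma simple_inv {s : V ≃ₗ[ℝ] V} (hs : s ∈ simpleReflections S) : s⁻¹ = s :=
  inv_eq_of_mul_eq_one_left (simple_mul_self S hs)

lemma simple_mem_weyl {s : V ≃ₗ[ℝ] V} (hs : s ∈ simpleReflections S) :
    s ∈ weylGroup S := Subgroup.subset_closure hs

lemma weyl_inner {w : V ≃ₗ[ℝ] V} (hw : w ∈ weylGroup S) :
    ∀ x y : V, ⟪w x, w y⟫ = ⟪x, y⟫ := by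
  induction hw using Subgroup.closure_induction with
  | mem s hs =>
    obtain ⟨i, hi⟩ := hs
    intro x y
    rw [hi, hi, inner_sRefl]
  | one => intro x y; rfl
  | mul u v hu hv hu' hv' =>
    intro x y
    rw [lequiv_mul_apply, lequiv_mul_apply, hu', hv']
  | inv u hu hu' =>
    intro x y
    calc ⟪u⁻¹ x, u⁻¹ y⟫ = ⟪u (u⁻¹ x), u (u⁻¹ y)⟫ := (hu' _ _).symm
    _ = ⟪x, y⟫ := by rw [lequiv_apply_inv_apply, lequiv_apply_inv_apply]

lemma weyl_maps_root {w : V ≃ₗ[ℝ] V} (hw : w ∈ weylGroup S) :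
    ∀ β ∈ S.Δ, w β ∈ S.Δ := by
  induction hw using Subgroup.closure_induction with
  | mem s hs =>
    obtain ⟨i, hi⟩ := hs
    intro β hβ
    rw [hi]
    exact S.reflect_mem _ (S.simple_mem i) β hβ
  | one => intro β hβ; exact hβ
  | mul u v hu hv hu' hv' =>
    intro β hβ
    rw [lequiv_mul_apply]
    exact hu' _ (hv' _ hβ)
  | inv u hu hu' =>
    intro β hβ
    have himg : S.Δ.image (fun x => u x) = S.Δ := by
      apply Finset.eq_of_subset_of_card_le
      · intro x hx
        obtain ⟨γ, hγ, rfl⟩ := Finset.mem_image.1 hx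
        exact hu' γ hγ
      · rw [Finset.card_image_of_injective _ u.injective]
    rw [← himg] at hβ
    obtain ⟨γ, hγ, hγe⟩ := Finset.mem_image.1 hβ
    have : u⁻¹ β = γ := by rw [← hγe, lequiv_inv_apply_apply]
    rw [this]
    exact hγ

lemma weyl_exists_word {w : V ≃ₗ[ℝ] V} (hw : w ∈ weylGroup S) :
    ∃ l : List (V ≃ₗ[ℝ] V), (∀ g ∈ l, g ∈ simpleReflections S) ∧ l.prod = w := by
  have hw' : w ∈ (weylGroup S).toSubmonoid := hw
  rw [weylGroup, Subgroup.closure_toSubmonoid] at hw'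
  obtain ⟨l, hl, hlp⟩ := Submonoid.exists_list_of_mem_closure hw'
  refine ⟨l, fun g hg => ?_, hlp⟩
  rcases hl g hg with h | h
  · exact h
  · rw [Set.mem_inv] at h
    have := simple_inv S h
    rw [inv_inv] at this
    rw [this]
    exact h

lemma word_mem_weyl {l : List (V ≃ₗ[ℝ] V)} (hl : ∀ g ∈ l, g ∈ simpleReflections S) :
    l.prod ∈ weylGroup S :=
  list_prod_mem fun g hg => simple_mem_weyl S (hl g hg)

lemma len_exists_word {w : V ≃ₗ[ℝ] V} (hw : w ∈ weylGroup S) :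
    ∃ l : List (V ≃ₗ[ℝ] V), l.length = len S w ∧
      (∀ g ∈ l, g ∈ simpleReflections S) ∧ l.prod = w := by
  have hne : { k | ∃ l : List (V ≃ₗ[ℝ] V),
      l.length = k ∧ (∀ g ∈ l, g ∈ simpleReflections S) ∧ l.prod = w }.Nonempty := by
    obtain ⟨l, hl, hlp⟩ := weyl_exists_word S hw
    exact ⟨l.length, l, rfl, hl, hlp⟩
  have := Nat.sInf_mem hne
  exact this

lemma len_le {w : V ≃ₗ[ℝ] V} {l : List (V ≃ₗ[ℝ] V)}
    (hl : ∀ g ∈ l, g ∈ simpleReflections S) (hlp : l.prod = w) :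
    len S w ≤ l.length :=
  Nat.sInf_le ⟨l, rfl, hl, hlp⟩

lemma len_one : len S (1 : V ≃ₗ[ℝ] V) = 0 :=
  Nat.le_zero.1 (len_le S (l := []) (by simp) rfl)

end WeylBasic


section RhoFacts

variable (S : RootData n r)

lemma sRefl_sum_erase (i : Fin r) :
    ∑ β ∈ S.pos.erase (S.α i), sRefl (S.α i) β = ∑ β ∈ S.pos.erase (S.α i), β := by
  refine Finset.sum_bij' (fun β _ => sRefl (S.α i) β) (fun β _ => sRefl (S.α i) β)
    ?_ ?_ ?_ ?_ ?_
  · intro β hβ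
    rw [Finset.mem_erase] at hβ ⊢
    exact ⟨S.sRefl_pos_ne i hβ.2 hβ.1, S.sRefl_pos_mem i hβ.2 hβ.1⟩
  · intro β hβ
    rw [Finset.mem_erase] at hβ ⊢
    exact ⟨S.sRefl_pos_ne i hβ.2 hβ.1, S.sRefl_pos_mem i hβ.2 hβ.1⟩
  · intro β _; exact sRefl_sRefl _ _
  · intro β _; exact sRefl_sRefl _ _
  · intro β _; rfl

lemma sRefl_rho (i : Fin r) : sRefl (S.α i) (weylVec S) = weylVec S - S.α i := by
  have hsum : sRefl (S.α i) (∑ β ∈ S.pos, β)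
      = (∑ β ∈ S.pos, β) - (2:ℝ) • S.α i := by
    have hmem := S.alpha_mem_pos i
    have hmap : sRefl (S.α i) (∑ β ∈ S.pos, β) = ∑ β ∈ S.pos, sRefl (S.α i) β := by
      have : sRefl (S.α i) (∑ β ∈ S.pos, β) = sReflEquiv (S.α i) (∑ β ∈ S.pos, β) := rfl
      rw [this, map_sum]
      rfl
    rw [hmap, ← Finset.add_sum_erase _ _ hmem, ← Finset.add_sum_erase _ (fun β => β) hmem,
      sRefl_sum_erase, S.sRefl_alpha]
    rw [show ((2:ℝ) • S.α i) = S.α i + S.α i by rw [two_smul]]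
    abel
  unfold weylVec
  rw [sRefl_smul, hsum, smul_sub, smul_smul]
  norm_num

lemma coeff_alpha_rho (i : Fin r) :
    2 * ⟪S.α i, weylVec S⟫ / ⟪S.α i, S.α i⟫ = 1 := by
  have h := sRefl_rho S i
  rw [sRefl_def] at h
  have h2 : (2 * ⟪S.α i, weylVec S⟫ / ⟪S.α i, S.α i⟫) • S.α i = (1:ℝ) • S.α i := by
    rw [one_smul]
    exact sub_right_inj.mp h
  exact smul_left_injective ℝ (S.alpha_ne_zero i) h2

lemma inner_rho_alpha_pos (i : Fin r) : 0 < ⟪weylVec S, S.α i⟫ := by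
  have h := coeff_alpha_rho S i
  have hq := S.inner_alpha_pos i
  set a : ℝ := ⟪S.α i, weylVec S⟫ with ha
  set q : ℝ := ⟪S.α i, S.α i⟫ with hqq
  have hq0 : q ≠ 0 := ne_of_gt hq
  have h2 : 2 * a = q := by
    field_simp at h
    linarith
  rw [real_inner_comm]
  rw [← ha]
  linarith

lemma exists_coeff_pos {β : V} (hβ : β ∈ S.pos) {c : Fin r → ℝ}
    (hc : ∀ i, 0 ≤ c i) (hcb : β = ∑ i, c i • S.α i) : ∃ j, 0 < c j := by
  by_contra hcon
  push_neg at hcon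
  have hc0 : ∀ i, c i = 0 := fun i => le_antisymm (hcon i) (hc i)
  refine S.pos_ne_zero hβ ?_
  rw [hcb]
  exact Finset.sum_eq_zero fun i _ => by rw [hc0 i, zero_smul]

lemma strict_dom_inner_pos {ν : V} (hν : ∀ i, 0 < ⟪ν, S.α i⟫)
    {β : V} (hβ : β ∈ S.pos) : 0 < ⟪ν, β⟫ := by
  obtain ⟨c, hc, hcb⟩ := S.pos_combo hβ
  obtain ⟨j, hj⟩ := exists_coeff_pos S hβ hc hcb
  rw [hcb, inner_sum]
  simp only [real_inner_smul_right]
  refine Finset.sum_pos' (fun i _ => mul_nonneg (hc i) (le_of_lt (hν i))) ?_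
  exact ⟨j, Finset.mem_univ j, mul_pos hj (hν j)⟩

end RhoFacts


section GroupAlg

/-- Shorthand for the basis exponentials of the group algebra. -/
def expE (μ : V) : AddMonoidAlgebra ℤ V := AddMonoidAlgebra.single μ 1

lemma expE_mul (μ ν : V) : expE μ * expE ν = expE (μ + ν) := by
  simp [expE, AddMonoidAlgebra.single_mul_single]

lemma expE_zero : expE (0 : V) = 1 := rfl

lemma expE_apply (μ ν : V) : (expE μ).coeff ν = if μ = ν then (1:ℤ) else 0 := by
  simp [expE, Finsupp.single_apply]

/-- The action of a linear automorphism on the group algebra. -/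
def Phi (w : V ≃ₗ[ℝ] V) : AddMonoidAlgebra ℤ V ≃ₐ[ℤ] AddMonoidAlgebra ℤ V :=
  AddMonoidAlgebra.domCongr ℤ ℤ w.toAddEquiv

lemma Phi_single (w : V ≃ₗ[ℝ] V) (μ : V) (c : ℤ) :
    Phi w (AddMonoidAlgebra.single μ c) = AddMonoidAlgebra.single (w μ) c :=
  AddMonoidAlgebra.domCongr_single _ _ _

lemma Phi_expE (w : V ≃ₗ[ℝ] V) (μ : V) : Phi w (expE μ) = expE (w μ) :=
  Phi_single w μ 1

lemma Phi_apply_coeff (w : V ≃ₗ[ℝ] V) (f : AddMonoidAlgebra ℤ V) (μ : V) :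
    (Phi w f).coeff (w μ) = f.coeff μ := by
  rw [Phi, AddMonoidAlgebra.coeff_domCongr]
  congr 1
  exact w.symm_apply_apply μ

lemma Phi_one (f : AddMonoidAlgebra ℤ V) : Phi (1 : V ≃ₗ[ℝ] V) f = f := by
  induction f using AddMonoidAlgebra.induction_linear with
  | zero => exact map_zero _
  | add a b ha hb => rw [map_add, ha, hb]
  | single μ c => exact Phi_single 1 μ c

lemma Phi_mul (u v : V ≃ₗ[ℝ] V) (f : AddMonoidAlgebra ℤ V) :
    Phi (u * v) f = Phi u (Phi v f) := by
  induction f using AddMonoidAlgebra.induction_linear with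
  | zero => simp only [map_zero]
  | add a b ha hb => simp only [map_add, ha, hb]
  | single μ c => rw [Phi_single, Phi_single, Phi_single]; rfl

variable (S : RootData n r)

/-- The (shifted) Weyl denominator. -/
def Dden (S : RootData n r) : AddMonoidAlgebra ℤ (EuclideanSpace ℝ (Fin n)) :=
  expE (weylVec S) * ∏ β ∈ S.pos, (1 - expE (-β))

lemma Phi_simple_Dden {s : V ≃ₗ[ℝ] V} (hs : s ∈ simpleReflections S) :
    Phi s (Dden S) = - Dden S := by
  obtain ⟨i, hi⟩ := hs
  have hprod : Phi s (∏ β ∈ S.pos, (1 - expE (-β)))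
      = ∏ β ∈ S.pos, (1 - expE (-(sRefl (S.α i) β))) := by
    rw [map_prod]
    refine Finset.prod_congr rfl fun β _ => ?_
    rw [map_sub, map_one, Phi_expE, map_neg, hi]
  have herase : ∏ β ∈ S.pos.erase (S.α i), (1 - expE (-(sRefl (S.α i) β)))
      = ∏ β ∈ S.pos.erase (S.α i), (1 - expE (-β)) := by
    refine Finset.prod_bij' (fun β _ => sRefl (S.α i) β) (fun β _ => sRefl (S.α i) β)
      ?_ ?_ ?_ ?_ ?_
    · intro β hβ
      rw [Finset.mem_erase] at hβ ⊢
      exact ⟨S.sRefl_pos_ne i hβ.2 hβ.1, S.sRefl_pos_mem i hβ.2 hβ.1⟩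
    · intro β hβ
      rw [Finset.mem_erase] at hβ ⊢
      exact ⟨S.sRefl_pos_ne i hβ.2 hβ.1, S.sRefl_pos_mem i hβ.2 hβ.1⟩
    · intro β _; exact sRefl_sRefl _ _
    · intro β _; exact sRefl_sRefl _ _
    · intro β _; rfl
  have hsplit : ∏ β ∈ S.pos, (1 - expE (-(sRefl (S.α i) β)))
      = (1 - expE (S.α i)) * ∏ β ∈ S.pos.erase (S.α i), (1 - expE (-β)) := by
    rw [← Finset.mul_prod_erase _ _ (S.alpha_mem_pos i), herase, S.sRefl_alpha, neg_neg]
  have hrho : Phi s (expE (weylVec S)) = expE (weylVec S - S.α i) := by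
    rw [Phi_expE, hi, sRefl_rho]
  unfold Dden
  rw [map_mul, hrho, hprod, hsplit]
  have hkey : expE (weylVec S - S.α i) * (1 - expE (S.α i))
      = - (expE (weylVec S) * (1 - expE (-S.α i))) := by
    rw [mul_sub, mul_sub, mul_one, mul_one, expE_mul, expE_mul]
    rw [show weylVec S - S.α i + S.α i = weylVec S by abel,
        show weylVec S + -S.α i = weylVec S - S.α i by abel]
    rw [neg_sub]
  rw [← mul_assoc, hkey, ← Finset.mul_prod_erase _ _ (S.alpha_mem_pos i)]
  ring

lemma Phi_word_Dden : ∀ l : List (V ≃ₗ[ℝ] V), (∀ g ∈ l, g ∈ simpleReflections S) →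
    Phi l.prod (Dden S) = ((-1:ℤ) ^ l.length) • Dden S := by
  intro l
  induction l with
  | nil => intro _; simp [Phi_one]
  | cons s l ih =>
    intro hl
    have hs : s ∈ simpleReflections S := hl s List.mem_cons_self
    have hl' : ∀ g ∈ l, g ∈ simpleReflections S := fun g hg => hl g (List.mem_cons_of_mem s hg)
    rw [List.prod_cons, Phi_mul, ih hl', map_zsmul, Phi_simple_Dden S hs]
    rw [List.length_cons, pow_succ]
    rw [smul_neg, ← neg_smul]
    ring_nf

end GroupAlg


section Parity

variable (S : RootData n r)

/-- The set of positive roots sent out of the positive roots by `w`. -/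
def negSet (S : RootData n r) (w : EuclideanSpace ℝ (Fin n) ≃ₗ[ℝ] EuclideanSpace ℝ (Fin n)) :
    Finset (EuclideanSpace ℝ (Fin n)) :=
  S.pos.filter (fun β => w β ∉ S.pos)

lemma negSet_one : negSet S (1 : V ≃ₗ[ℝ] V) = ∅ :=
  Finset.filter_false_of_mem (fun β hβ => by rw [lequiv_one_apply]; exact not_not_intro hβ)

lemma negSet_step {s w : V ≃ₗ[ℝ] V} (hs : s ∈ simpleReflections S) (hw : w ∈ weylGroup S) :
    ((-1:ℤ)) ^ (negSet S (s * w)).card = -((-1:ℤ)) ^ (negSet S w).card := by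
  obtain ⟨i, hi⟩ := hs
  set γ : V := w⁻¹ (S.α i) with hγ
  have hγΔ : γ ∈ S.Δ := weyl_maps_root S (inv_mem hw) _ (S.simple_mem i)
  have hwγ : w γ = S.α i := lequiv_apply_inv_apply w _
  have hwnegγ : w (-γ) = -S.α i := by rw [map_neg, hwγ]
  have hmem : ∀ β ∈ S.pos, ((s * w) β ∉ S.pos ↔
      (w β = S.α i ∨ (w β ∉ S.pos ∧ w β ≠ -S.α i))) := by
    intro β hβ
    have hβΔ : w β ∈ S.Δ := weyl_maps_root S hw β (S.pos_subset β hβ)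
    rw [lequiv_mul_apply, hi]
    exact S.sRefl_notin_pos_iff i hβΔ
  by_cases hγpos : γ ∈ S.pos
  · have hset : negSet S (s * w) = insert γ (negSet S w) := by
      ext β
      rw [negSet, negSet, Finset.mem_insert, Finset.mem_filter, Finset.mem_filter]
      constructor
      · rintro ⟨hβ, hcond⟩
        rcases (hmem β hβ).1 hcond with h | ⟨h1, _⟩
        · left
          have := congrArg w.symm h
          rw [LinearEquiv.symm_apply_apply] at this
          rw [this, hγ, lequiv_inv_apply]
        · right; exact ⟨hβ, h1⟩
      · rintro (rfl | ⟨hβ, hcond⟩)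
        · exact ⟨hγpos, (hmem γ hγpos).2 (Or.inl hwγ)⟩
        · refine ⟨hβ, (hmem β hβ).2 (Or.inr ⟨hcond, ?_⟩)⟩
          intro heq
          have : β = -γ := by
            have := congrArg w.symm heq
            rw [LinearEquiv.symm_apply_apply, map_neg] at this
            rw [this, hγ, lequiv_inv_apply]
          rw [this] at hβ
          exact S.not_neg_mem_pos hγpos hβ
    have hnotmem : γ ∉ negSet S w := by
      rw [negSet, Finset.mem_filter]
      rintro ⟨-, h⟩
      rw [hwγ] at h
      exact h (S.alpha_mem_pos i)
    rw [hset, Finset.card_insert_of_notMem hnotmem, pow_succ]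
    ring
  · have hnγpos : -γ ∈ S.pos := S.neg_mem_pos_of_not_mem hγΔ hγpos
    have hset : negSet S (s * w) = (negSet S w).erase (-γ) := by
      ext β
      rw [negSet, negSet, Finset.mem_erase, Finset.mem_filter, Finset.mem_filter]
      constructor
      · rintro ⟨hβ, hcond⟩
        rcases (hmem β hβ).1 hcond with h | ⟨h1, h2⟩
        · exfalso
          have : β = γ := by
            have := congrArg w.symm h
            rw [LinearEquiv.symm_apply_apply] at this
            rw [this, hγ, lequiv_inv_apply]
          rw [this] at hβ
          exact hγpos hβ
        · refine ⟨?_, hβ, h1⟩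
          intro heq
          rw [heq, hwnegγ] at h2
          exact h2 rfl
      · rintro ⟨hne, hβ, hcond⟩
        refine ⟨hβ, (hmem β hβ).2 (Or.inr ⟨hcond, ?_⟩)⟩
        intro heq
        refine hne ?_
        have := congrArg w.symm heq
        rw [LinearEquiv.symm_apply_apply, map_neg] at this
        rw [this, hγ, lequiv_inv_apply]
    have hmem' : -γ ∈ negSet S w := by
      rw [negSet, Finset.mem_filter]
      refine ⟨hnγpos, ?_⟩
      rw [hwnegγ]
      exact S.not_neg_mem_pos (S.alpha_mem_pos i)
    have hcard : (negSet S w).card = (negSet S (s*w)).card + 1 := by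
      rw [hset, Finset.card_erase_of_mem hmem']
      have : 1 ≤ (negSet S w).card := Finset.card_pos.2 ⟨-γ, hmem'⟩
      omega
    rw [hcard, pow_succ]
    ring

lemma parity_word : ∀ l : List (V ≃ₗ[ℝ] V), (∀ g ∈ l, g ∈ simpleReflections S) →
    ((-1:ℤ)) ^ (negSet S l.prod).card = (-1:ℤ) ^ l.length := by
  intro l
  induction l with
  | nil => intro _; rw [List.prod_nil, negSet_one]; rfl
  | cons s l ih =>
    intro hl
    have hs : s ∈ simpleReflections S := hl s List.mem_cons_self
    have hl' : ∀ g ∈ l, g ∈ simpleReflections S := fun g hg => hl g (List.mem_cons_of_mem s hg)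
    rw [List.prod_cons, negSet_step S hs (word_mem_weyl S hl'), ih hl',
      List.length_cons, pow_succ]
    ring

lemma len_parity {w : V ≃ₗ[ℝ] V} (hw : w ∈ weylGroup S) :
    ((-1:ℤ)) ^ (len S w) = (-1:ℤ) ^ (negSet S w).card := by
  obtain ⟨l, hlen, hl, hlp⟩ := len_exists_word S hw
  rw [← hlen, ← hlp, parity_word S l hl]

lemma len_mul_simple {s w : V ≃ₗ[ℝ] V} (hs : s ∈ simpleReflections S)
    (hw : w ∈ weylGroup S) :
    ((-1:ℤ)) ^ (len S (s * w)) = -((-1:ℤ)) ^ (len S w) := by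
  rw [len_parity S (mul_mem (simple_mem_weyl S hs) hw), len_parity S hw]
  exact negSet_step S hs hw

lemma Phi_weyl_Dden {w : V ≃ₗ[ℝ] V} (hw : w ∈ weylGroup S) :
    Phi w (Dden S) = ((-1:ℤ) ^ (len S w)) • Dden S := by
  obtain ⟨l, hlen, hl, hlp⟩ := len_exists_word S hw
  rw [← hlp, Phi_word_Dden S l hl, hlen, hlp]

end Parity


section Stabilizer

variable (S : RootData n r)

lemma exists_first_neg : ∀ (m : List (V ≃ₗ[ℝ] V)), (∀ g ∈ m, g ∈ simpleReflections S) →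
    ∀ β ∈ S.pos, m.prod β ∉ S.pos →
    ∃ m₁ t m₂, m = m₁ ++ t :: m₂ ∧ t ∈ simpleReflections S ∧
      m₂.prod β ∈ S.pos ∧ t (m₂.prod β) ∉ S.pos := by
  intro m
  induction m with
  | nil =>
    intro _ β hβ hcon
    rw [List.prod_nil, lequiv_one_apply] at hcon
    exact absurd hβ hcon
  | cons t m ih =>
    intro hword β hβ hneg
    by_cases h : m.prod β ∈ S.pos
    · refine ⟨[], t, m, rfl, hword t List.mem_cons_self, h, ?_⟩
      rwa [List.prod_cons, lequiv_mul_apply] at hneg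
    · obtain ⟨m₁, t', m₂, heq, ht', h1, h2⟩ :=
        ih (fun g hg => hword g (List.mem_cons_of_mem t hg)) β hβ h
      exact ⟨t :: m₁, t', m₂, by rw [heq, List.cons_append], ht', h1, h2⟩

lemma conj_sRefl {u : V ≃ₗ[ℝ] V} (hu : u ∈ weylGroup S) (β x : V) :
    sRefl (u β) x = u (sRefl β (u⁻¹ x)) := by
  rw [sRefl_def, sRefl_def, map_sub, map_smul, lequiv_apply_inv_apply]
  congr 2
  · have h1 : ⟪u β, x⟫ = ⟪β, u⁻¹ x⟫ := by
      conv_lhs => rw [← lequiv_apply_inv_apply u x]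
      exact weyl_inner S hu β (u⁻¹ x)
    have h2 : ⟪u β, u β⟫ = ⟪β, β⟫ := weyl_inner S hu β β
    rw [h1, h2]

lemma eq_one_of_pos_stable {w : V ≃ₗ[ℝ] V} (hw : w ∈ weylGroup S)
    (hstab : ∀ β ∈ S.pos, w β ∈ S.pos) : w = 1 := by
  obtain ⟨l, hlen, hword, hprod⟩ := len_exists_word S hw
  rcases List.eq_nil_or_concat l with rfl | ⟨l', s, rfl⟩
  · rw [← hprod]; rfl
  · exfalso
    rw [List.concat_eq_append] at hlen hword hprod
    have hs : s ∈ simpleReflections S := hword s (by simp)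
    obtain ⟨i, hi⟩ := hs
    have hβpos : S.α i ∈ S.pos := S.alpha_mem_pos i
    have hword' : ∀ g ∈ l', g ∈ simpleReflections S := fun g hg => hword g (by simp [hg])
    have hprod' : (l' ++ [s]).prod = l'.prod * s := by
      rw [List.prod_append, List.prod_cons, List.prod_nil, mul_one]
    have hvβ : l'.prod (S.α i) ∉ S.pos := by
      have hwβ : w (S.α i) ∈ S.pos := hstab _ hβpos
      have hkey : w (S.α i) = -(l'.prod (S.α i)) := by
        rw [← hprod, hprod', lequiv_mul_apply, hi, sRefl_self (S.alpha_ne_zero i), map_neg]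
      rw [hkey] at hwβ
      intro hv
      exact S.not_neg_mem_pos hv hwβ
    obtain ⟨m₁, t, m₂, heq, ht, h1, h2⟩ := exists_first_neg S l' hword' _ hβpos hvβ
    obtain ⟨j, hj⟩ := ht
    have hγ : m₂.prod (S.α i) = S.α j := by
      by_contra hne
      exact h2 (by rw [hj]; exact S.sRefl_pos_mem j h1 hne)
    have hm₂word : ∀ g ∈ m₂, g ∈ simpleReflections S := fun g hg =>
      hword' g (by rw [heq]; exact List.mem_append_right m₁ (List.mem_cons_of_mem t hg))
    have hm₂mem : m₂.prod ∈ weylGroup S := word_mem_weyl S hm₂word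
    have hconj : t * (m₂.prod * s) = m₂.prod := by
      refine LinearEquiv.ext fun x => ?_
      rw [lequiv_mul_apply, lequiv_mul_apply, hj, hi, ← hγ,
        conj_sRefl S hm₂mem, lequiv_inv_apply_apply, sRefl_sRefl]
    have hshort : w = (m₁ ++ m₂).prod := by
      rw [← hprod, hprod', heq, List.prod_append, List.prod_cons, List.prod_append]
      rw [mul_assoc, mul_assoc, hconj]
    have hm₁word : ∀ g ∈ m₁, g ∈ simpleReflections S := fun g hg =>
      hword' g (by rw [heq]; exact List.mem_append_left _ hg)
    have hshortword : ∀ g ∈ m₁ ++ m₂, g ∈ simpleReflections S := by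
      intro g hg
      rcases List.mem_append.1 hg with h | h
      · exact hm₁word g h
      · exact hm₂word g h
    have hle := len_le S hshortword hshort.symm
    have hlength : l'.length + 1 = len S w := by rw [← hlen]; simp
    have hlength' : l'.length = m₁.length + m₂.length + 1 := by rw [heq]; simp; omega
    rw [List.length_append] at hle
    omega

lemma eq_one_of_rho_strict_dom {w : V ≃ₗ[ℝ] V} (hw : w ∈ weylGroup S)
    (hdom : ∀ i, 0 < ⟪w (weylVec S), S.α i⟫) : w = 1 := by
  apply eq_one_of_pos_stable S hw
  intro β hβ
  have hβΔ : w β ∈ S.Δ := weyl_maps_root S hw β (S.pos_subset β hβ)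
  have hpos : 0 < ⟪w (weylVec S), w β⟫ := by
    rw [weyl_inner S hw]
    exact strict_dom_inner_pos S (fun i => inner_rho_alpha_pos S i) hβ
  by_contra hnot
  have hneg : -(w β) ∈ S.pos := S.neg_mem_pos_of_not_mem hβΔ hnot
  have := strict_dom_inner_pos S hdom hneg
  rw [inner_neg_right] at this
  linarith

end Stabilizer


section AntiInvariance

variable (S : RootData n r)

lemma sReflEquiv_mem_simple (i : Fin r) : sReflEquiv (S.α i) ∈ simpleReflections S :=
  ⟨i, fun _ => rfl⟩

lemma exists_dominant
    (hfin : (weylGroup S : Set (V ≃ₗ[ℝ] V)).Finite) (μ : V) :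
    ∃ w ∈ weylGroup S, ∀ i, 0 ≤ ⟪w μ, S.α i⟫ := by
  have hne : hfin.toFinset.Nonempty :=
    ⟨1, hfin.mem_toFinset.2 (one_mem (weylGroup S))⟩
  obtain ⟨w, hwmem, hmax⟩ := hfin.toFinset.exists_max_image
    (fun w => ⟪w μ, weylVec S⟫) hne
  have hwW : w ∈ weylGroup S := hfin.mem_toFinset.1 hwmem
  refine ⟨w, hwW, fun i => ?_⟩
  set s := sReflEquiv (S.α i)
  have hs : s ∈ simpleReflections S := sReflEquiv_mem_simple S i
  have hsw : s * w ∈ hfin.toFinset :=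
    hfin.mem_toFinset.2 (mul_mem (simple_mem_weyl S hs) hwW)
  have hle := hmax (s * w) hsw
  have hcalc : ⟪(s * w) μ, weylVec S⟫ = ⟪w μ, weylVec S⟫ - ⟪w μ, S.α i⟫ := by
    have h1 : (s * w) μ = sRefl (S.α i) (w μ) := rfl
    rw [h1, show ⟪sRefl (S.α i) (w μ), weylVec S⟫
        = ⟪sRefl (S.α i) (sRefl (S.α i) (w μ)), sRefl (S.α i) (weylVec S)⟫ from
        (inner_sRefl _ _ _).symm, sRefl_sRefl, sRefl_rho, inner_sub_right]
  rw [hcalc] at hle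
  linarith

lemma Phi_word_anti {g : AddMonoidAlgebra ℤ V}
    (hg : ∀ s ∈ simpleReflections S, Phi s g = -g) :
    ∀ l : List (V ≃ₗ[ℝ] V), (∀ t ∈ l, t ∈ simpleReflections S) →
      Phi l.prod g = ((-1:ℤ) ^ l.length) • g := by
  intro l
  induction l with
  | nil => intro _; simp [Phi_one]
  | cons s l ih =>
    intro hl
    have hs : s ∈ simpleReflections S := hl s List.mem_cons_self
    have hl' : ∀ t ∈ l, t ∈ simpleReflections S := fun t ht => hl t (List.mem_cons_of_mem s ht)
    rw [List.prod_cons, Phi_mul, ih hl', map_zsmul, hg s hs, List.length_cons, pow_succ]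
    rw [smul_neg, ← neg_smul]
    ring_nf

lemma Phi_weyl_anti {g : AddMonoidAlgebra ℤ V}
    (hg : ∀ s ∈ simpleReflections S, Phi s g = -g)
    {w : V ≃ₗ[ℝ] V} (hw : w ∈ weylGroup S) :
    Phi w g = ((-1:ℤ) ^ (len S w)) • g := by
  obtain ⟨l, hlen, hl, hlp⟩ := len_exists_word S hw
  rw [← hlp, Phi_word_anti S hg l hl, hlen, hlp]

lemma coeff_transfer {g : AddMonoidAlgebra ℤ V}
    (hg : ∀ s ∈ simpleReflections S, Phi s g = -g)
    {w : V ≃ₗ[ℝ] V} (hw : w ∈ weylGroup S) (μ : V) :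
    g.coeff μ = ((-1:ℤ) ^ (len S w)) * g.coeff (w μ) := by
  have h := Phi_apply_coeff w g μ
  rw [Phi_weyl_anti S hg hw] at h
  rw [← h, AddMonoidAlgebra.coeff_smul_apply, smul_eq_mul]

lemma coeff_zero_of_wall {g : AddMonoidAlgebra ℤ V}
    (hg : ∀ s ∈ simpleReflections S, Phi s g = -g)
    {ν : V} (i : Fin r) (hi : ⟪ν, S.α i⟫ = 0) : g.coeff ν = 0 := by
  set s := sReflEquiv (S.α i)
  have hs : s ∈ simpleReflections S := sReflEquiv_mem_simple S i
  have hsν : s ν = ν := by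
    show sRefl (S.α i) ν = ν
    exact sRefl_of_inner_eq_zero (by rw [real_inner_comm]; exact hi)
  have h := Phi_apply_coeff s g ν
  rw [hsν, hg s hs, AddMonoidAlgebra.coeff_neg, Finsupp.neg_apply] at h
  omega

end AntiInvariance


section Coefficients

variable (S : RootData n r)

lemma prod_neg_expE (t : Finset V) :
    ∏ β ∈ t, (-expE (-β)) = ((-1:ℤ) ^ t.card) • expE (-∑ β ∈ t, β) := by
  induction t using Finset.induction with
  | empty => simp [expE_zero]
  | @insert a t h ih =>
    rw [Finset.prod_insert h, ih, Finset.sum_insert h, Finset.card_insert_of_notMem h,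
      mul_smul_comm, neg_mul, expE_mul, pow_succ, neg_add, mul_smul]
    rw [show ((-1:ℤ) • expE (-a + -∑ β ∈ t, β)) = -expE (-a + -∑ β ∈ t, β) from
      neg_one_zsmul _]

lemma Dden_expand :
    Dden S = ∑ t ∈ S.pos.powerset,
      ((-1:ℤ) ^ t.card) • expE (weylVec S - ∑ β ∈ t, β) := by
  unfold Dden
  have h1 : ∀ β ∈ S.pos, (1 - expE (-β)) = -expE (-β) + 1 := fun β _ => by ring
  rw [Finset.prod_congr rfl h1, Finset.prod_add, Finset.mul_sum]
  refine Finset.sum_congr rfl fun t ht => ?_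
  rw [Finset.prod_const_one, mul_one, prod_neg_expE, mul_smul_comm, expE_mul,
    sub_eq_add_neg]

lemma Dden_coeff (ν : V) :
    (Dden S).coeff ν = ∑ t ∈ S.pos.powerset, ((-1:ℤ) ^ t.card) *
      (if weylVec S - ∑ β ∈ t, β = ν then 1 else 0) := by
  rw [Dden_expand, AddMonoidAlgebra.coeff_sum, Finset.sum_apply']
  refine Finset.sum_congr rfl fun t ht => ?_
  rw [AddMonoidAlgebra.coeff_smul_apply, smul_eq_mul, expE_apply]

lemma strict_dom_eq_empty {ν : V} (hν : ∀ i, 0 < ⟪ν, S.α i⟫) {t : Finset V}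
    (ht : t ⊆ S.pos) (heq : weylVec S - ∑ β ∈ t, β = ν) : t = ∅ := by
  set σ : V := ∑ β ∈ t, β with hσ
  have hstep1 : ∀ i, ⟪S.α i, σ⟫ ≤ 0 := by
    intro i
    have hq := S.inner_alpha_pos i
    have hZ : ∀ β ∈ t, ∃ m : ℤ, 2 * ⟪S.α i, β⟫ / ⟪S.α i, S.α i⟫ = (m:ℝ) :=
      fun β hβ => S.crystallographic _ (S.simple_mem i) β (S.pos_subset β (ht hβ))
    choose g hgspec using hZ
    set M : ℤ := ∑ β ∈ t.attach, g β.1 β.2 with hM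
    have hsum : 2 * ⟪S.α i, σ⟫ / ⟪S.α i, S.α i⟫ = (M:ℝ) := by
      rw [hσ, inner_sum, Finset.mul_sum, Finset.sum_div, hM]
      push_cast
      rw [← Finset.sum_attach t (fun β => 2 * ⟪S.α i, β⟫ / ⟪S.α i, S.α i⟫)]
      exact Finset.sum_congr rfl fun β _ => hgspec β.1 β.2
    have hrho := coeff_alpha_rho S i
    set q : ℝ := ⟪S.α i, S.α i⟫ with hqq
    set x : ℝ := ⟪S.α i, σ⟫ with hx
    set aρ : ℝ := ⟪S.α i, weylVec S⟫ with haρ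
    have hq0 : q ≠ 0 := ne_of_gt hq
    have h2x : 2 * x = M * q := by
      field_simp at hsum
      linarith
    have h2ρ : 2 * aρ = q := by
      field_simp at hrho
      linarith
    have hνi : ⟪S.α i, ν⟫ = aρ - x := by
      rw [← heq, inner_sub_right]
    have hpos : (0:ℝ) < aρ - x := by
      rw [← hνi, real_inner_comm]
      exact hν i
    have hMlt : (M:ℝ) < 1 := by nlinarith
    have hM0 : M ≤ 0 := by
      have : M < 1 := by exact_mod_cast hMlt
      omega
    have hM0' : (M:ℝ) ≤ 0 := by exact_mod_cast hM0
    nlinarith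
  have hstep2 : ⟪σ, σ⟫ ≤ 0 := by
    conv_lhs => rw [hσ, inner_sum]
    refine Finset.sum_nonpos fun β hβ => ?_
    obtain ⟨c, hc, hcb⟩ := S.pos_combo (ht hβ)
    rw [hcb, inner_sum]
    refine Finset.sum_nonpos fun j _ => ?_
    rw [real_inner_smul_right]
    exact mul_nonpos_of_nonneg_of_nonpos (hc j) (by rw [real_inner_comm]; exact hstep1 j)
  have hσ0 : σ = 0 := by
    have h0 : ⟪σ, σ⟫ = 0 := le_antisymm hstep2 real_inner_self_nonneg
    exact inner_self_eq_zero.1 h0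
  by_contra hne
  obtain ⟨β₀, hβ₀⟩ := Finset.nonempty_of_ne_empty hne
  have hcombos : ∀ β ∈ t, ∃ c : Fin r → ℝ, (∀ i, 0 ≤ c i) ∧ β = ∑ i, c i • S.α i :=
    fun β hβ => S.pos_combo (ht hβ)
  choose c hc hcb using hcombos
  have hzero : ∑ j, (∑ β ∈ t.attach, c β.1 β.2 j) • S.α j = 0 := by
    calc ∑ j, (∑ β ∈ t.attach, c β.1 β.2 j) • S.α j
        = ∑ j, ∑ β ∈ t.attach, c β.1 β.2 j • S.α j := by
          refine Finset.sum_congr rfl fun j _ => ?_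
          rw [Finset.sum_smul]
      _ = ∑ β ∈ t.attach, ∑ j, c β.1 β.2 j • S.α j := Finset.sum_comm
      _ = ∑ β ∈ t.attach, β.1 := Finset.sum_congr rfl fun β _ => (hcb β.1 β.2).symm
      _ = ∑ β ∈ t, β := Finset.sum_attach t (fun β => β)
      _ = 0 := by rw [← hσ]; exact hσ0
  have hcoef := S.indep' hzero
  have hall : ∀ j, c β₀ hβ₀ j = 0 := by
    intro j
    have hsum0 := hcoef j
    have := (Finset.sum_eq_zero_iff_of_nonneg
      (fun β _ => hc β.1 β.2 j)).1 hsum0 ⟨β₀, hβ₀⟩ (Finset.mem_attach t _)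
    exact this
  refine S.pos_ne_zero (ht hβ₀) ?_
  rw [hcb β₀ hβ₀]
  exact Finset.sum_eq_zero fun j _ => by rw [hall j, zero_smul]

end Coefficients


section Final

variable (S : RootData n r)

/-- The alternating sum over the Weyl group. -/
def fW (hfin : (weylGroup S : Set (V ≃ₗ[ℝ] V)).Finite) : AddMonoidAlgebra ℤ V :=
  ∑ w ∈ hfin.toFinset, AddMonoidAlgebra.single (w (weylVec S)) ((-1:ℤ) ^ len S w)

lemma Dden_coeff_strict {ν : V} (hν : ∀ i, 0 < ⟪ν, S.α i⟫) :
    (Dden S).coeff ν = if weylVec S = ν then 1 else 0 := by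
  rw [Dden_coeff]
  rw [Finset.sum_eq_single ∅]
  · rw [Finset.card_empty, pow_zero, one_mul, Finset.sum_empty, sub_zero]
  · intro t htmem htne
    have : (if weylVec S - ∑ β ∈ t, β = ν then (1:ℤ) else 0) = 0 := by
      rw [if_neg]
      intro heq
      exact htne (strict_dom_eq_empty S hν (Finset.mem_powerset.1 htmem) heq)
    rw [this, mul_zero]
  · intro h
    exact absurd (Finset.empty_mem_powerset _) h

lemma amg_single_neg (a : V) (b : ℤ) :
    AddMonoidAlgebra.single a (-b) = -AddMonoidAlgebra.single a b := by
  ext c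
  rw [AddMonoidAlgebra.coeff_neg, Finsupp.neg_apply, AddMonoidAlgebra.coeff_single, AddMonoidAlgebra.coeff_single, Finsupp.single_apply, Finsupp.single_apply, apply_ite Neg.neg, neg_zero]

lemma Phi_simple_fW (hfin : (weylGroup S : Set (V ≃ₗ[ℝ] V)).Finite)
    {s : V ≃ₗ[ℝ] V} (hs : s ∈ simpleReflections S) :
    Phi s (fW S hfin) = -(fW S hfin) := by
  unfold fW
  rw [map_sum]
  have hmemT : ∀ u ∈ hfin.toFinset, s * u ∈ hfin.toFinset := fun u hu =>
    hfin.mem_toFinset.2 (mul_mem (simple_mem_weyl S hs) (hfin.mem_toFinset.1 hu))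
  have hinv : ∀ u : V ≃ₗ[ℝ] V, s * (s * u) = u := fun u => by
    rw [← mul_assoc, simple_mul_self S hs, one_mul]
  have hstep : ∑ w ∈ hfin.toFinset,
      Phi s (AddMonoidAlgebra.single (w (weylVec S)) ((-1:ℤ) ^ len S w))
      = ∑ u ∈ hfin.toFinset,
        -(AddMonoidAlgebra.single (u (weylVec S)) ((-1:ℤ) ^ len S u)) := by
    refine Finset.sum_bij' (fun w _ => s * w) (fun u _ => s * u) ?_ ?_ ?_ ?_ ?_
    · exact hmemT
    · exact hmemT
    · intro w _; exact hinv w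
    · intro u _; exact hinv u
    · intro w hw
      have h1 : ((-1:ℤ) ^ len S w) = -((-1:ℤ) ^ len S (s * w)) := by
        rw [len_mul_simple S hs (hfin.mem_toFinset.1 hw)]
        ring
      show Phi s (AddMonoidAlgebra.single (w (weylVec S)) ((-1:ℤ) ^ len S w))
        = -(AddMonoidAlgebra.single ((s * w) (weylVec S)) ((-1:ℤ) ^ len S (s * w)))
      rw [Phi_single, h1, amg_single_neg]
      rfl
  rw [hstep, ← Finset.sum_neg_distrib]

lemma fW_coeff (hfin : (weylGroup S : Set (V ≃ₗ[ℝ] V)).Finite) (ν : V) :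
    (fW S hfin).coeff ν = ∑ w ∈ hfin.toFinset,
      ((-1:ℤ) ^ len S w) * (if w (weylVec S) = ν then 1 else 0) := by
  rw [fW, AddMonoidAlgebra.coeff_sum, Finset.sum_apply']
  refine Finset.sum_congr rfl fun w _ => ?_
  rw [AddMonoidAlgebra.coeff_single, Finsupp.single_apply]
  split <;> ring

lemma fW_coeff_strict (hfin : (weylGroup S : Set (V ≃ₗ[ℝ] V)).Finite)
    {ν : V} (hν : ∀ i, 0 < ⟪ν, S.α i⟫) :
    (fW S hfin).coeff ν = if weylVec S = ν then 1 else 0 := by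
  rw [fW_coeff, Finset.sum_eq_single 1]
  · rw [len_one, pow_zero, one_mul, lequiv_one_apply]
  · intro w hw hne
    have : (if w (weylVec S) = ν then (1:ℤ) else 0) = 0 := by
      rw [if_neg]
      intro heq
      refine hne (eq_one_of_rho_strict_dom S (hfin.mem_toFinset.1 hw) fun i => ?_)
      rw [heq]
      exact hν i
    rw [this, mul_zero]
  · intro h
    exact absurd (hfin.mem_toFinset.2 (one_mem _)) h

lemma Dden_eq_fW (hfin : (weylGroup S : Set (V ≃ₗ[ℝ] V)).Finite) :
    Dden S = fW S hfin := by
  have hD : ∀ s ∈ simpleReflections S, Phi s (Dden S) = -(Dden S) :=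
    fun s hs => Phi_simple_Dden S hs
  have hF : ∀ s ∈ simpleReflections S, Phi s (fW S hfin) = -(fW S hfin) :=
    fun s hs => Phi_simple_fW S hfin hs
  refine AddMonoidAlgebra.ext (Finsupp.ext fun μ => ?_)
  obtain ⟨w, hwW, hdom⟩ := exists_dominant S hfin μ
  rw [coeff_transfer S hD hwW μ, coeff_transfer S hF hwW μ]
  congr 1
  by_cases hwall : ∃ i, ⟪w μ, S.α i⟫ = 0
  · obtain ⟨i, hi⟩ := hwall
    rw [coeff_zero_of_wall S hD i hi, coeff_zero_of_wall S hF i hi]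
  · push_neg at hwall
    have hstrict : ∀ i, 0 < ⟪w μ, S.α i⟫ :=
      fun i => lt_of_le_of_ne (hdom i) (Ne.symm (hwall i))
    rw [Dden_coeff_strict S hstrict, fW_coeff_strict S hfin hstrict]

end Final

end AuxDev

/-- The Weyl denominator identity: the product over positive roots of `(1 - e^{-α})`
equals the alternating sum over the Weyl group of `ε(w) e^{w(ρ)-ρ}`, as elements of the
group algebra of the weight space, where `ε(w) = (-1)^{l(w)}`. -/
theorem statement8 (S : RootData n r)
    (hfin : (weylGroup S :
      Set (EuclideanSpace ℝ (Fin n) ≃ₗ[ℝ] EuclideanSpace ℝ (Fin n))).Finite) :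
    (∏ β ∈ S.pos, ((1 : AddMonoidAlgebra ℤ (EuclideanSpace ℝ (Fin n))) -
        AddMonoidAlgebra.single (-β) 1)) =
      ∑ w ∈ hfin.toFinset,
        AddMonoidAlgebra.single (w (weylVec S) - weylVec S) ((-1 : ℤ) ^ len S w) := by
  have hDF := Dden_eq_fW S hfin
  have hL : expE (-(weylVec S)) * Dden S
      = ∏ β ∈ S.pos, ((1 : AddMonoidAlgebra ℤ (EuclideanSpace ℝ (Fin n))) -
        AddMonoidAlgebra.single (-β) 1) := by
    unfold Dden
    rw [← mul_assoc, expE_mul, neg_add_cancel, expE_zero, one_mul]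
    rfl
  have hR : expE (-(weylVec S)) * fW S hfin
      = ∑ w ∈ hfin.toFinset,
        AddMonoidAlgebra.single (w (weylVec S) - weylVec S) ((-1 : ℤ) ^ len S w) := by
    unfold fW
    rw [Finset.mul_sum]
    refine Finset.sum_congr rfl fun w _ => ?_
    rw [expE, AddMonoidAlgebra.single_mul_single, one_mul, neg_add_eq_sub]
  rw [← hL, ← hR, hDF]
end
end

section
/- The Kostant multiplicity formula: the multiplicity of a weight λ in the irreducible highest weight module L^μ equals Σ_{w∈W} ε(w) P(w(μ+ρ) - (λ+ρ)), where P is the Kostant partition function. -/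
open scoped RealInnerProductSpace
open scoped Classical

noncomputable section

variable {n r : ℕ}

-- ===== auxiliary development =====

namespace KostantAux

open Finset

/-- Functions supported on the positive roots. -/
def Fn (S : RootData n r) : Type _ :=
  {f : EuclideanSpace ℝ (Fin n) → ℕ // ∀ v, v ∉ S.pos → f v = 0}

/-- The weight of such a function. -/
def sig (S : RootData n r) (f : Fn S) : EuclideanSpace ℝ (Fin n) :=
  ∑ v ∈ S.pos, (f.1 v : ℝ) • v

/-- The zero element of `Fn`. -/
def zFn (S : RootData n r) : Fn S := ⟨fun _ => 0, fun _ _ => rfl⟩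

lemma sig_zFn (S : RootData n r) : sig S (zFn S) = 0 := by
  simp [sig, zFn]

/-- Add the indicator function of `T`. -/
def finc (S : RootData n r) (f : Fn S) (T : Finset (EuclideanSpace ℝ (Fin n))) : Fn S :=
  ⟨fun v => f.1 v + (if v ∈ T ∧ v ∈ S.pos then 1 else 0),
    fun v hv => by simp [f.2 v hv, hv]⟩

/-- Subtract the indicator function of `T`. -/
def fdec (S : RootData n r) (f : Fn S) (T : Finset (EuclideanSpace ℝ (Fin n))) : Fn S :=
  ⟨fun v => f.1 v - (if v ∈ T ∧ v ∈ S.pos then 1 else 0),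
    fun v hv => by simp [f.2 v hv]⟩

lemma sig_finc (S : RootData n r) (f : Fn S) {T : Finset (EuclideanSpace ℝ (Fin n))}
    (hT : T ⊆ S.pos) : sig S (finc S f T) = sig S f + ∑ β ∈ T, β := by
  unfold sig finc
  simp only [Nat.cast_add, add_smul, Finset.sum_add_distrib]
  congr 1
  have step : ∀ v ∈ S.pos,
      ((if v ∈ T ∧ v ∈ S.pos then 1 else 0 : ℕ) : ℝ) • v = if v ∈ T then v else 0 :=
    fun v hv => by by_cases h : v ∈ T <;> simp [h, hv]
  rw [Finset.sum_congr rfl step, Finset.sum_ite_mem, Finset.inter_eq_right.mpr hT]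

lemma fdec_finc (S : RootData n r) (f : Fn S) (T : Finset (EuclideanSpace ℝ (Fin n))) :
    fdec S (finc S f T) T = f := by
  apply Subtype.ext; funext v
  simp [fdec, finc]

lemma finc_fdec (S : RootData n r) (f : Fn S) (T : Finset (EuclideanSpace ℝ (Fin n)))
    (hf : ∀ β ∈ T, f.1 β ≠ 0) : finc S (fdec S f T) T = f := by
  apply Subtype.ext; funext v
  simp only [finc, fdec]
  by_cases h : v ∈ T ∧ v ∈ S.pos
  · simp only [h, if_pos, and_self]
    have := Nat.one_le_iff_ne_zero.mpr (hf v h.1)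
    omega
  · simp [h]

lemma sig_fdec (S : RootData n r) (f : Fn S) {T : Finset (EuclideanSpace ℝ (Fin n))}
    (hT : T ⊆ S.pos) (hf : ∀ β ∈ T, f.1 β ≠ 0) :
    sig S (fdec S f T) = sig S f - ∑ β ∈ T, β := by
  have h := sig_finc S (fdec S f T) hT
  rw [finc_fdec S f T hf] at h
  rw [h]; abel

/-- A linear functional equal to `1` on each simple root. -/
lemma exists_ht (S : RootData n r) :
    ∃ ht : EuclideanSpace ℝ (Fin n) →ₗ[ℝ] ℝ, ∀ i, ht (S.α i) = 1 := by
  obtain ⟨g, hg⟩ := LinearMap.exists_extend ((Module.Basis.span S.indep).constr ℝ (fun _ => (1 : ℝ)))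
  refine ⟨g, fun i => ?_⟩
  have h1 : S.α i = ((Module.Basis.span S.indep i : Submodule.span ℝ (Set.range S.α)) :
      EuclideanSpace ℝ (Fin n)) := (congrArg Subtype.val (Module.Basis.span_apply S.indep i)).symm
  rw [h1]
  have := congrFun (congrArg (DFunLike.coe) hg) (Module.Basis.span S.indep i)
  simp only [LinearMap.comp_apply, Submodule.subtype_apply] at this
  rw [this, Module.Basis.constr_basis]

lemma ht_pos (S : RootData n r) (ht : EuclideanSpace ℝ (Fin n) →ₗ[ℝ] ℝ)
    (hht : ∀ i, ht (S.α i) = 1) {β} (hβ : β ∈ S.pos) : 0 < ht β := by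
  obtain ⟨c, hc0, hcsum⟩ := (S.mem_pos_iff β (S.pos_subset β hβ)).mp hβ
  have hne := S.root_ne_zero β (S.pos_subset β hβ)
  have hhtβ : ht β = ∑ i, c i := by
    rw [hcsum, map_sum]
    exact Finset.sum_congr rfl fun i _ => by rw [map_smul, hht, smul_eq_mul, mul_one]
  rw [hhtβ]
  have hex : ∃ i, 0 < c i := by
    by_contra h; push_neg at h
    exact hne (by
      rw [hcsum]
      exact Finset.sum_eq_zero fun i _ => by
        rw [le_antisymm (h i) (hc0 i), zero_smul])
  obtain ⟨i, hi⟩ := hex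
  exact Finset.sum_pos' (fun j _ => hc0 j) ⟨i, Finset.mem_univ i, hi⟩

lemma ht_sig (S : RootData n r) (ht : EuclideanSpace ℝ (Fin n) →ₗ[ℝ] ℝ) (f : Fn S) :
    ht (sig S f) = ∑ v ∈ S.pos, (f.1 v : ℝ) * ht v := by
  rw [sig, map_sum]
  exact Finset.sum_congr rfl fun v _ => by rw [map_smul, smul_eq_mul]

lemma ht_sig_nonneg (S : RootData n r) (ht : EuclideanSpace ℝ (Fin n) →ₗ[ℝ] ℝ)
    (hht : ∀ i, ht (S.α i) = 1) (f : Fn S) : 0 ≤ ht (sig S f) := by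
  rw [ht_sig]
  exact Finset.sum_nonneg fun v hv =>
    mul_nonneg (Nat.cast_nonneg _) (le_of_lt (ht_pos S ht hht hv))

lemma ht_sumT_nonneg (S : RootData n r) (ht : EuclideanSpace ℝ (Fin n) →ₗ[ℝ] ℝ)
    (hht : ∀ i, ht (S.α i) = 1) {T : Finset (EuclideanSpace ℝ (Fin n))} (hT : T ⊆ S.pos) :
    0 ≤ ht (∑ β ∈ T, β) := by
  rw [map_sum]
  exact Finset.sum_nonneg fun v hv => le_of_lt (ht_pos S ht hht (hT hv))

/-- Finiteness of the set of `f` of bounded height. -/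
lemma finite_le (S : RootData n r) (ht : EuclideanSpace ℝ (Fin n) →ₗ[ℝ] ℝ)
    (hht : ∀ i, ht (S.α i) = 1) (C : ℝ) :
    {f : Fn S | ht (sig S f) ≤ C}.Finite := by
  rcases S.pos.eq_empty_or_nonempty with h | h
  · have : Subsingleton (Fn S) := ⟨fun a b => Subtype.ext (funext fun v => by
      rw [a.2 v (by simp [h]), b.2 v (by simp [h])])⟩
    exact Set.toFinite _
  · set δ := S.pos.inf' h (fun v => ht v) with hδdef
    have hδ : 0 < δ := (Finset.lt_inf'_iff h).mpr fun v hv => ht_pos S ht hht hv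
    set K := ⌈C / δ⌉₊ with hK
    have key : ∀ f : Fn S, ht (sig S f) ≤ C → ∀ v, f.1 v ≤ K := by
      intro f hf v
      by_cases hv : v ∈ S.pos
      · have h1 : (f.1 v : ℝ) * ht v ≤ ht (sig S f) := by
          rw [ht_sig]
          exact Finset.single_le_sum
            (f := fun v => (f.1 v : ℝ) * ht v)
            (fun w hw => mul_nonneg (Nat.cast_nonneg _) (le_of_lt (ht_pos S ht hht hw))) hv
        have h2 : (f.1 v : ℝ) * δ ≤ (f.1 v : ℝ) * ht v :=
          mul_le_mul_of_nonneg_left (Finset.inf'_le _ hv) (Nat.cast_nonneg _)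
        have h3 : (f.1 v : ℝ) ≤ C / δ := by
          rw [le_div_iff₀ hδ]
          exact le_trans h2 (le_trans h1 hf)
        have h4 : (f.1 v : ℝ) ≤ (K : ℝ) := le_trans h3 (Nat.le_ceil _)
        exact_mod_cast h4
      · rw [f.2 v hv]; exact Nat.zero_le _
    have : Finite {f : Fn S | ht (sig S f) ≤ C} := by
      refine Finite.of_injective
        (fun f => fun v : {v // v ∈ S.pos} =>
          (⟨(f : Fn S).1 v.1, Nat.lt_succ_of_le (key f.1 f.2 v.1)⟩ : Fin (K + 1))) ?_
      intro f g hfg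
      apply Subtype.ext; apply Subtype.ext; funext v
      by_cases hv : v ∈ S.pos
      · have := congrFun hfg ⟨v, hv⟩
        simpa using congrArg Fin.val this
      · rw [(f : Fn S).2 v hv, (g : Fn S).2 v hv]
    exact Set.finite_coe_iff.mp this


lemma count_eq (S : RootData n r) (ht : EuclideanSpace ℝ (Fin n) →ₗ[ℝ] ℝ)
    (hht : ∀ i, ht (S.α i) = 1) (C : ℝ) (v : EuclideanSpace ℝ (Fin n)) (hv : ht v ≤ C) :
    (kostantP S v : ℤ) =
      ∑ f ∈ (finite_le S ht hht C).toFinset, (if sig S f = v then (1 : ℤ) else 0) := by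
  have h1 : kostantP S v =
      ((finite_le S ht hht C).toFinset.filter (fun f => sig S f = v)).card := by
    rw [kostantP, ← Nat.card_eq_finsetCard]
    apply Nat.card_congr
    refine ⟨fun f => ⟨⟨f.1, f.2.1⟩, ?_⟩, fun g => ⟨g.1.1, g.1.2, (Finset.mem_filter.mp g.2).2⟩,
      fun f => rfl, fun g => by apply Subtype.ext; rfl⟩
    refine Finset.mem_filter.mpr ⟨(Set.Finite.mem_toFinset _).mpr ?_, f.2.2⟩
    show ht (sig S ⟨f.1, f.2.1⟩) ≤ C
    rw [show sig S ⟨f.1, f.2.1⟩ = v from f.2.2]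
    exact hv
  rw [h1]
  exact_mod_cast (Finset.sum_boole _ _).symm

end KostantAux

set_option maxHeartbeats 1000000 in
/-- The Kostant multiplicity formula: if `m` is the multiplicity function of the
irreducible highest weight module `L^μ`, characterized by the Weyl character formula
`ch L^μ · ∏_{α∈Δ⁺}(1 - e^{-α}) = ∑_{w∈W} ε(w) e^{w(μ+ρ)-ρ}` (coefficient-wise), then
`m(ξ) = ∑_{w∈W} ε(w) P(w(μ+ρ) - (ξ+ρ))` with `P` the Kostant partition function. -/
theorem statement12 (S : RootData n r)
    (hfin : (weylGroup S :
      Set (EuclideanSpace ℝ (Fin n) ≃ₗ[ℝ] EuclideanSpace ℝ (Fin n))).Finite)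
    (μ : EuclideanSpace ℝ (Fin n)) (m : EuclideanSpace ℝ (Fin n) → ℕ)
    (hsupp : ∀ ξ, m ξ ≠ 0 → ∃ c : Fin r → ℕ, ξ = μ - ∑ i, (c i : ℝ) • S.α i)
    (hchar : ∀ ξ, ∑ T ∈ S.pos.powerset,
        (-1 : ℤ) ^ T.card * (m (ξ + ∑ β ∈ T, β) : ℤ) =
      ∑ w ∈ hfin.toFinset, (-1 : ℤ) ^ len S w *
        (if w (μ + weylVec S) - weylVec S = ξ then 1 else 0)) :
    ∀ ξ, (m ξ : ℤ) = ∑ w ∈ hfin.toFinset, (-1 : ℤ) ^ len S w *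
        (kostantP S (w (μ + weylVec S) - (ξ + weylVec S)) : ℤ) := by
  intro ξ
  classical
  obtain ⟨ht, hht⟩ := KostantAux.exists_ht S
  have h1W : (1 : (EuclideanSpace ℝ (Fin n) ≃ₗ[ℝ] EuclideanSpace ℝ (Fin n))) ∈ hfin.toFinset :=
    hfin.mem_toFinset.mpr (weylGroup S).one_mem
  have hWne : hfin.toFinset.Nonempty := ⟨1, h1W⟩
  set C : ℝ := max (max 0 (ht μ - ht ξ))
    (hfin.toFinset.sup' hWne (fun w => ht (w (μ + weylVec S) - (ξ + weylVec S)))) with hC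
  set 𝔉 := (KostantAux.finite_le S ht hht C).toFinset with h𝔉
  have hmem𝔉 : ∀ f : KostantAux.Fn S, f ∈ 𝔉 ↔ ht (KostantAux.sig S f) ≤ C :=
    fun f => Set.Finite.mem_toFinset _
  have hC0 : (0 : ℝ) ≤ C := le_trans (le_max_left 0 _) (le_max_left _ _)
  have hz𝔉 : KostantAux.zFn S ∈ 𝔉 := (hmem𝔉 _).mpr (by
    rw [KostantAux.sig_zFn, map_zero]; exact hC0)
  have hmbound : ∀ γ, m (ξ + γ) ≠ 0 → ht γ ≤ C := by
    intro γ hγ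
    obtain ⟨c, hc⟩ := hsupp _ hγ
    have h1 : ht ξ + ht γ = ht μ - ∑ i, (c i : ℝ) := by
      have h2 := congrArg ht hc
      rw [map_add, map_sub, map_sum] at h2
      rw [h2]
      congr 1
      exact Finset.sum_congr rfl fun i _ => by rw [map_smul, hht, smul_eq_mul, mul_one]
    have hsum : (0 : ℝ) ≤ ∑ i, (c i : ℝ) :=
      Finset.sum_nonneg fun i _ => Nat.cast_nonneg _
    have h3 : ht μ - ht ξ ≤ C := le_trans (le_max_right 0 _) (le_max_left _ _)
    linarith
  -- the combinatorial inversion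
  have keyA : ∑ p ∈ 𝔉 ×ˢ S.pos.powerset,
      (-1 : ℤ) ^ p.2.card * (m (ξ + KostantAux.sig S p.1 + ∑ β ∈ p.2, β) : ℤ) = (m ξ : ℤ) := by
    have hmemD : ∀ p : KostantAux.Fn S × Finset (EuclideanSpace ℝ (Fin n)),
        p ∈ 𝔉 ×ˢ S.pos.powerset ↔ p.1 ∈ 𝔉 ∧ p.2 ⊆ S.pos := by
      intro p; rw [Finset.mem_product, Finset.mem_powerset]
    calc ∑ p ∈ 𝔉 ×ˢ S.pos.powerset,
        (-1 : ℤ) ^ p.2.card * (m (ξ + KostantAux.sig S p.1 + ∑ β ∈ p.2, β) : ℤ)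
        = ∑ p ∈ (𝔉 ×ˢ S.pos.powerset).filter
            (fun p => m (ξ + KostantAux.sig S p.1 + ∑ β ∈ p.2, β) ≠ 0),
            (-1 : ℤ) ^ p.2.card * (m (ξ + KostantAux.sig S p.1 + ∑ β ∈ p.2, β) : ℤ) :=
          by
            refine (Finset.sum_filter_of_ne ?_).symm
            intro x hx hfx hm
            exact hfx (by rw [hm, Nat.cast_zero, mul_zero])
      _ = ∑ p ∈ (𝔉 ×ˢ S.pos.powerset).filter
            (fun p => (∀ β ∈ p.2, p.1.1 β ≠ 0) ∧ m (ξ + KostantAux.sig S p.1) ≠ 0),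
            (-1 : ℤ) ^ p.2.card * (m (ξ + KostantAux.sig S p.1) : ℤ) := by
          refine Finset.sum_bij' (i := fun p _ => (KostantAux.finc S p.1 p.2, p.2))
            (j := fun p _ => (KostantAux.fdec S p.1 p.2, p.2)) ?_ ?_ ?_ ?_ ?_
          · intro p hp
            obtain ⟨hpD, hm⟩ := Finset.mem_filter.mp hp
            obtain ⟨hp1, hp2⟩ := (hmemD p).mp hpD
            have hsig := KostantAux.sig_finc S p.1 hp2
            refine Finset.mem_filter.mpr ⟨(hmemD _).mpr ⟨?_, hp2⟩, ?_, ?_⟩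
            · refine (hmem𝔉 _).mpr ?_
              rw [hsig]
              exact hmbound _ (by rw [← add_assoc]; exact hm)
            · intro β hβ
              simp [KostantAux.finc, hβ, hp2 hβ]
            · rw [hsig, ← add_assoc]; exact hm
          · intro p hp
            obtain ⟨hpD, hQ, hm⟩ := Finset.mem_filter.mp hp
            obtain ⟨hp1, hp2⟩ := (hmemD p).mp hpD
            have hsig := KostantAux.sig_fdec S p.1 hp2 hQ
            refine Finset.mem_filter.mpr ⟨(hmemD _).mpr ⟨?_, hp2⟩, ?_⟩
            · refine (hmem𝔉 _).mpr ?_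
              rw [hsig, map_sub]
              have h4 := KostantAux.ht_sumT_nonneg S ht hht hp2
              have h5 := (hmem𝔉 p.1).mp hp1
              linarith
            · have h6 : ξ + KostantAux.sig S (KostantAux.fdec S p.1 p.2) + ∑ β ∈ p.2, β =
                  ξ + KostantAux.sig S p.1 := by rw [hsig]; abel
              rw [h6]; exact hm
          · intro p hp
            show (KostantAux.fdec S (KostantAux.finc S p.1 p.2) p.2, p.2) = p
            rw [KostantAux.fdec_finc]
          · intro p hp
            obtain ⟨_, hQ, _⟩ := Finset.mem_filter.mp hp
            show (KostantAux.finc S (KostantAux.fdec S p.1 p.2) p.2, p.2) = p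
            rw [KostantAux.finc_fdec S p.1 p.2 hQ]
          · intro p hp
            obtain ⟨hpD, _⟩ := Finset.mem_filter.mp hp
            obtain ⟨_, hp2⟩ := (hmemD p).mp hpD
            show _ = (-1 : ℤ) ^ p.2.card *
              (m (ξ + KostantAux.sig S (KostantAux.finc S p.1 p.2)) : ℤ)
            rw [KostantAux.sig_finc S p.1 hp2, ← add_assoc]
      _ = ∑ p ∈ ((𝔉 ×ˢ S.pos.powerset).filter
            (fun p => (∀ β ∈ p.2, p.1.1 β ≠ 0))).filter
            (fun p => m (ξ + KostantAux.sig S p.1) ≠ 0),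
            (-1 : ℤ) ^ p.2.card * (m (ξ + KostantAux.sig S p.1) : ℤ) := by
          rw [Finset.filter_filter]
      _ = ∑ p ∈ (𝔉 ×ˢ S.pos.powerset).filter
            (fun p => (∀ β ∈ p.2, p.1.1 β ≠ 0)),
            (-1 : ℤ) ^ p.2.card * (m (ξ + KostantAux.sig S p.1) : ℤ) :=
          by
            refine Finset.sum_filter_of_ne ?_
            intro x hx hfx hm
            exact hfx (by rw [hm, Nat.cast_zero, mul_zero])
      _ = ∑ p ∈ 𝔉 ×ˢ S.pos.powerset,
            (if (∀ β ∈ p.2, p.1.1 β ≠ 0) then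
              (-1 : ℤ) ^ p.2.card * (m (ξ + KostantAux.sig S p.1) : ℤ) else 0) :=
          Finset.sum_filter
            (fun p : KostantAux.Fn S × Finset (EuclideanSpace ℝ (Fin n)) =>
              ∀ β ∈ p.2, p.1.1 β ≠ 0)
            (fun p : KostantAux.Fn S × Finset (EuclideanSpace ℝ (Fin n)) =>
              (-1 : ℤ) ^ p.2.card * (m (ξ + KostantAux.sig S p.1) : ℤ))
      _ = ∑ f ∈ 𝔉, ∑ T ∈ S.pos.powerset,
            (if (∀ β ∈ T, f.1 β ≠ 0) then
              (-1 : ℤ) ^ T.card * (m (ξ + KostantAux.sig S f) : ℤ) else 0) :=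
          Finset.sum_product' 𝔉 S.pos.powerset (fun f T =>
            if (∀ β ∈ T, f.1 β ≠ 0) then
              (-1 : ℤ) ^ T.card * (m (ξ + KostantAux.sig S f) : ℤ) else 0)
      _ = ∑ f ∈ 𝔉, (if S.pos.filter (fun v => f.1 v ≠ 0) = ∅ then (1 : ℤ) else 0) *
            (m (ξ + KostantAux.sig S f) : ℤ) := by
          refine Finset.sum_congr rfl fun f _ => ?_
          rw [← Finset.sum_powerset_neg_one_pow_card, Finset.sum_mul]
          have hps : S.pos.powerset.filter (fun T => ∀ β ∈ T, f.1 β ≠ 0) =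
              (S.pos.filter (fun v => f.1 v ≠ 0)).powerset := by
            ext T
            constructor
            · intro hT
              obtain ⟨h1, h2⟩ := Finset.mem_filter.mp hT
              have h1' := Finset.mem_powerset.mp h1
              exact Finset.mem_powerset.mpr
                (fun x hx => Finset.mem_filter.mpr ⟨h1' hx, h2 x hx⟩)
            · intro hT
              have h := Finset.mem_powerset.mp hT
              exact Finset.mem_filter.mpr
                ⟨Finset.mem_powerset.mpr
                  (fun x hx => (Finset.mem_filter.mp (h hx)).1),
                 fun x hx => (Finset.mem_filter.mp (h hx)).2⟩
          rw [← hps, Finset.sum_filter]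
      _ = ∑ f ∈ 𝔉, (if f = KostantAux.zFn S then (m ξ : ℤ) else 0) := by
          refine Finset.sum_congr rfl fun f _ => ?_
          by_cases hf : S.pos.filter (fun v => f.1 v ≠ 0) = ∅
          · have hfz : f = KostantAux.zFn S := by
              apply Subtype.ext; funext v
              by_cases hv : v ∈ S.pos
              · by_contra hne
                have : v ∈ S.pos.filter (fun v => f.1 v ≠ 0) :=
                  Finset.mem_filter.mpr ⟨hv, hne⟩
                rw [hf] at this
                exact absurd this (Finset.notMem_empty v)
              · exact f.2 v hv
            rw [if_pos hf, if_pos hfz, hfz, KostantAux.sig_zFn, add_zero, one_mul]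
          · have hfz : f ≠ KostantAux.zFn S := by
              intro h
              apply hf
              rw [h]
              simp [KostantAux.zFn]
            rw [if_neg hf, if_neg hfz, zero_mul]
      _ = (m ξ : ℤ) := by
          rw [Finset.sum_ite_eq' 𝔉 (KostantAux.zFn S)]
          exact if_pos hz𝔉
  calc (m ξ : ℤ)
      = ∑ f ∈ 𝔉, ∑ T ∈ S.pos.powerset,
          (-1 : ℤ) ^ T.card * (m (ξ + KostantAux.sig S f + ∑ β ∈ T, β) : ℤ) := by
        rw [← Finset.sum_product']; exact keyA.symm
    _ = ∑ f ∈ 𝔉, ∑ w ∈ hfin.toFinset, (-1 : ℤ) ^ len S w *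
          (if w (μ + weylVec S) - weylVec S = ξ + KostantAux.sig S f then 1 else 0) :=
        Finset.sum_congr rfl fun f _ => hchar (ξ + KostantAux.sig S f)
    _ = ∑ w ∈ hfin.toFinset, ∑ f ∈ 𝔉, (-1 : ℤ) ^ len S w *
          (if w (μ + weylVec S) - weylVec S = ξ + KostantAux.sig S f then 1 else 0) :=
        Finset.sum_comm
    _ = ∑ w ∈ hfin.toFinset, (-1 : ℤ) ^ len S w *
          ∑ f ∈ 𝔉, (if KostantAux.sig S f = w (μ + weylVec S) - (ξ + weylVec S)
            then (1 : ℤ) else 0) := by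
        refine Finset.sum_congr rfl fun w _ => ?_
        rw [Finset.mul_sum]
        refine Finset.sum_congr rfl fun f _ => ?_
        congr 1
        refine if_congr ?_ rfl rfl
        constructor
        · intro h
          rw [eq_sub_iff_add_eq]
          rw [sub_eq_iff_eq_add] at h
          rw [h]; abel
        · intro h
          rw [h]; abel
    _ = ∑ w ∈ hfin.toFinset, (-1 : ℤ) ^ len S w *
          (kostantP S (w (μ + weylVec S) - (ξ + weylVec S)) : ℤ) := by
        refine Finset.sum_congr rfl fun w hw => ?_
        congr 1
        refine (KostantAux.count_eq S ht hht C _ ?_).symm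
        exact le_trans
          (Finset.le_sup' (fun w => ht (w (μ + weylVec S) - (ξ + weylVec S))) hw)
          (le_max_right _ _)
end
end
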